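/- Let n ∈ ℕ (n ≥ 1) and let I be a proper open subinterval of ℝ. If f : I → ℝ is Jensen convex of order n, then for every compact subinterval [a,b] ⊆ I there exists a constant L ≥ 0 such that |f(x) − f(y)| ≤ L·|x − y| for all rational x, y ∈ [a,b] ∩ ℚ; that is, f is Lipschitz on the rational points of every compact subinterval of I. -/

import Mathlib

open Finset

/-- The difference operator `Δ_h`. -/
noncomputable def dOp (h : ℝ) (f : ℝ → ℝ) : ℝ → ℝ := fun x => f (x + h) - f x

/-- Iterated difference operator `Δ_{h_1} ⋯ Δ_{h_k}` for a list `[h_1, …, h_k]`. -/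
noncomputable def dList (l : List ℝ) (f : ℝ → ℝ) : ℝ → ℝ := l.foldr dOp f

/-- The divided difference `[x_0, …, x_m; f]`. -/
noncomputable def divDiff (m : ℕ) (x : Fin (m + 1) → ℝ) (f : ℝ → ℝ) : ℝ :=
  ∑ i, f (x i) / ∏ j ∈ Finset.univ.erase i, (x i - x j)

/-- `I` is a proper open subinterval of the real line. -/
def ProperOpenInterval (I : Set ℝ) : Prop :=
  IsOpen I ∧ I.OrdConnected ∧ I.Nonempty ∧ I ≠ Set.univ

/-- A real number which is rational. -/
def IsRatR (x : ℝ) : Prop := ∃ q : ℚ, (q : ℝ) = x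

/-- `f` is Wright convex of order `n` on `I`. -/
def WrightConvexOrder (n : ℕ) (I : Set ℝ) (f : ℝ → ℝ) : Prop :=
  ∀ l : List ℝ, l.length = n + 1 → (∀ h ∈ l, 0 < h) →
    ∀ x : ℝ, x ∈ I → x + l.sum ∈ I → 0 ≤ dList l f x

/-- `f` is Jensen convex of order `n` on `I`. -/
def JensenConvexOrder (n : ℕ) (I : Set ℝ) (f : ℝ → ℝ) : Prop :=
  ∀ h : ℝ, 0 < h → ∀ x : ℝ, x ∈ I → x + (n + 1) * h ∈ I → 0 ≤ (dOp h)^[n + 1] f x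

/-- `f` is convex of order `n` on `I`. -/
def ConvexOrder (n : ℕ) (I : Set ℝ) (f : ℝ → ℝ) : Prop :=
  ∀ x : Fin (n + 2) → ℝ, Function.Injective x → (∀ i, x i ∈ I) →
    0 ≤ divDiff (n + 1) x f

noncomputable def DD (f : ℝ → ℝ) (s : Finset ℝ) : ℝ :=
  ∑ i ∈ s, f i / ∏ j ∈ s.erase i, (i - j)

lemma DD_singleton (f : ℝ → ℝ) (a : ℝ) : DD f {a} = f a := by
  simp [DD]

lemma DD_rec (f : ℝ → ℝ) (s : Finset ℝ) (a b : ℝ) (ha : a ∉ s) (hb : b ∉ s) (hab : a ≠ b) :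
    DD f (insert a (insert b s)) * (b - a) = DD f (insert b s) - DD f (insert a s) := by
  have hais : a ∉ insert b s := by simp [hab, ha]
  have hbis : b ∉ insert a s := by simp [Ne.symm hab, hb]
  unfold DD
  rw [Finset.sum_insert hais, Finset.sum_insert hb, Finset.sum_insert hb,
    Finset.sum_insert ha]
  have e1 : (insert a (insert b s)).erase a = insert b s := Finset.erase_insert hais
  have e2 : ∀ i ∈ s, (insert a (insert b s)).erase i = insert a (insert b (s.erase i)) := by
    intro i hi
    rw [Finset.erase_insert_of_ne (by rintro rfl; exact ha hi),
      Finset.erase_insert_of_ne (by rintro rfl; exact hb hi)]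
  have e3 : (insert a (insert b s)).erase b = insert a s := by
    rw [Finset.insert_comm, Finset.erase_insert hbis]
  have e4 : ∀ i ∈ s, (insert b s).erase i = insert b (s.erase i) := by
    intro i hi; rw [Finset.erase_insert_of_ne (by rintro rfl; exact hb hi)]
  have e5 : ∀ i ∈ s, (insert a s).erase i = insert a (s.erase i) := by
    intro i hi; rw [Finset.erase_insert_of_ne (by rintro rfl; exact ha hi)]
  have sA : ∑ x ∈ s, f x / ∏ j ∈ (insert a (insert b s)).erase x, (x - j)
      = ∑ i ∈ s, f i / ((i - a) * ((i - b) * ∏ j ∈ s.erase i, (i - j))) := by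
    apply Finset.sum_congr rfl
    intro i hi
    rw [e2 i hi, Finset.prod_insert (by
        simp only [Finset.mem_insert, Finset.mem_erase, not_or]
        exact ⟨hab, fun h => ha h.2⟩),
      Finset.prod_insert (by
        simp only [Finset.mem_erase, not_and]
        exact fun _ => hb)]
  rw [sA, e1, e3, Finset.erase_insert hb, Finset.erase_insert ha,
    Finset.prod_insert hb, Finset.prod_insert ha]
  have sB : ∑ x ∈ s, f x / ∏ j ∈ (insert b s).erase x, (x - j)
      = ∑ x ∈ s, f x / ((x - b) * ∏ j ∈ s.erase x, (x - j)) := by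
    refine Finset.sum_congr rfl fun i hi => ?_
    rw [e4 i hi, Finset.prod_insert (by simp only [Finset.mem_erase, not_and]; exact fun _ => hb)]
  have sC : ∑ x ∈ s, f x / ∏ j ∈ (insert a s).erase x, (x - j)
      = ∑ x ∈ s, f x / ((x - a) * ∏ j ∈ s.erase x, (x - j)) := by
    refine Finset.sum_congr rfl fun i hi => ?_
    rw [e5 i hi, Finset.prod_insert (by simp only [Finset.mem_erase, not_and]; exact fun _ => ha)]
  rw [sB, sC]
  have hba : b - a ≠ 0 := sub_ne_zero.mpr (Ne.symm hab)
  have keya : f a / ((a - b) * ∏ j ∈ s, (a - j)) * (b - a) = -(f a / ∏ j ∈ s, (a - j)) := by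
    by_cases hP : (∏ j ∈ s, (a - j)) = 0
    · simp [hP]
    · field_simp
      ring
  have keyb : f b / ((b - a) * ∏ j ∈ s, (b - j)) * (b - a) = f b / ∏ j ∈ s, (b - j) := by
    by_cases hP : (∏ j ∈ s, (b - j)) = 0
    · simp [hP]
    · field_simp
  have keyi : ∀ i ∈ s, f i / ((i - a) * ((i - b) * ∏ j ∈ s.erase i, (i - j))) * (b - a)
      = f i / ((i - b) * ∏ j ∈ s.erase i, (i - j)) - f i / ((i - a) * ∏ j ∈ s.erase i, (i - j)) := by
    intro i hi
    have hia : i - a ≠ 0 := sub_ne_zero.mpr (by rintro rfl; exact ha hi)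
    have hib : i - b ≠ 0 := sub_ne_zero.mpr (by rintro rfl; exact hb hi)
    by_cases hP : (∏ j ∈ s.erase i, (i - j)) = 0
    · simp [hP]
    · field_simp
      ring
  rw [add_mul, add_mul, Finset.sum_mul, keya, keyb, Finset.sum_congr rfl keyi,
    Finset.sum_sub_distrib]
  ring

section grid
variable (h : ℝ) (hh : 0 < h)
include hh

lemma gridset (m : ℕ) (y : ℝ) :
    (range (m+1)).image (fun i : ℕ => y + i*h) =
      insert y ((range m).image (fun i : ℕ => (y+h) + i*h)) := by
  ext z
  simp only [mem_image, mem_range, mem_insert]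
  constructor
  · rintro ⟨i, hi, rfl⟩
    rcases Nat.eq_zero_or_pos i with rfl | hipos
    · left; simp
    · right
      obtain ⟨j, rfl⟩ := Nat.exists_eq_add_of_lt hipos
      refine ⟨j, by omega, by push_cast; ring⟩
  · rintro (rfl | ⟨j, hj, rfl⟩)
    · exact ⟨0, by omega, by simp⟩
    · exact ⟨j+1, by omega, by push_cast; ring⟩

lemma grid_notmem (m : ℕ) (y : ℝ) : y ∉ (range m).image (fun i : ℕ => (y+h) + i*h) := by
  simp only [mem_image, mem_range, not_exists]
  rintro i ⟨hi, heq⟩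
  have : (0:ℝ) ≤ (i:ℝ) := Nat.cast_nonneg i
  nlinarith

lemma grid_top_notmem (m : ℕ) (y : ℝ) :
    y + (m+1)*h ∉ (range m).image (fun i : ℕ => (y+h) + i*h) := by
  simp only [mem_image, mem_range, not_exists]
  rintro i ⟨hi, heq⟩
  have : (i:ℝ) + 1 < (m:ℝ) + 1 := by
    have : (i:ℝ) < m := by exact_mod_cast hi
    linarith
  nlinarith

lemma DD_grid (f : ℝ → ℝ) : ∀ m : ℕ, ∀ y : ℝ,
    DD f ((range (m+1)).image (fun i : ℕ => y + i*h)) * (m.factorial * h ^ m)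
      = (dOp h)^[m] f y := by
  intro m
  induction m with
  | zero => intro y; simp [DD_singleton]
  | succ m ih =>
    intro y
    have htop : ((m:ℝ)+1)*h > 0 := by positivity
    have hy_ne : y ≠ y + ((m:ℝ)+1)*h := by intro hcontra; nlinarith
    have hiA : (range (m+1)).image (fun i : ℕ => (y+h) + i*h) =
        insert (y + ((m:ℝ)+1)*h) ((range m).image (fun i : ℕ => (y+h) + i*h)) := by
      rw [Finset.range_add_one, Finset.image_insert]
      congr 1
      push_cast; ring
    have hdecomp : (range (m+2)).image (fun i : ℕ => y + i*h) =
        insert y (insert (y + ((m:ℝ)+1)*h) ((range m).image (fun i : ℕ => (y+h) + i*h))) := by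
      rw [gridset h hh (m+1) y, hiA]
    have hiB : insert y ((range m).image (fun i : ℕ => (y+h) + i*h)) =
        (range (m+1)).image (fun i : ℕ => y + i*h) := (gridset h hh m y).symm
    have hrec := DD_rec f ((range m).image (fun i : ℕ => (y+h) + i*h)) y (y + ((m:ℝ)+1)*h)
      (grid_notmem h hh m y) (grid_top_notmem h hh m y) hy_ne
    -- hrec : DD f (big) * ((y + (m+1)h) - y) = DD f (upper grid) - DD f (lower grid)
    have hfac : ((m:ℝ)) ≥ 0 := Nat.cast_nonneg m
    have hmf : ((m.factorial : ℝ)) > 0 := by positivity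
    have e1 := ih (y + h)
    have e2 := ih y
    have hit : (dOp h)^[m+1] f y = (dOp h)^[m] f (y+h) - (dOp h)^[m] f y := by
      rw [Function.iterate_succ_apply']
      rfl
    rw [hdecomp, hit, ← e1, ← e2, hiA, ← hiB, Nat.factorial_succ]
    push_cast
    linear_combination ((m.factorial : ℝ) * h^m) * hrec
end grid

lemma DD_int_nonneg (n : ℕ) (I : Set ℝ) (hconn : I.OrdConnected) (f : ℝ → ℝ)
    (hf : JensenConvexOrder n I f) (x₀ h : ℝ) (hh : 0 < h) :
    ∀ G : ℕ, ∀ S : Finset ℤ, ∀ hScard : S.card = n + 2, (∀ k ∈ S, x₀ + k*h ∈ I) →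
      (S.max' (by rw [← Finset.card_pos, hScard]; omega) - S.min' (by rw [← Finset.card_pos, hScard]; omega)).toNat ≤ G →
      0 ≤ DD f (S.image (fun k : ℤ => x₀ + k*h)) := by
  set g : ℤ → ℝ := fun k : ℤ => x₀ + k*h with hg
  have hgmono : StrictMono g := by
    intro p q hpq
    simp only [hg]
    have : (p:ℝ) < q := by exact_mod_cast hpq
    nlinarith
  have hginj : Function.Injective g := hgmono.injective
  have himg : ∀ (T : Finset ℤ) (k : ℤ), k ∉ T → g k ∉ T.image g := by
    intro T k hk hmem
    obtain ⟨j, hj, he⟩ := Finset.mem_image.mp hmem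
    exact hk (hginj he ▸ hj)
  intro G
  induction G with
  | zero =>
    intro S hcard hmem hspread
    exfalso
    have hne : S.Nonempty := by rw [← Finset.card_pos]; omega
    have hsub : S ⊆ Finset.Icc (S.min' hne) (S.max' hne) := by
      intro k hk; exact Finset.mem_Icc.mpr ⟨Finset.min'_le S k hk, Finset.le_max' S k hk⟩
    have := Finset.card_le_card hsub
    rw [Int.card_Icc] at this
    omega
  | succ G ih =>
    intro S hcard hmem hspread
    have hne : S.Nonempty := by rw [← Finset.card_pos]; omega
    set mn := S.min' hne with hmn
    set mx := S.max' hne with hmx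
    have hmnS : mn ∈ S := Finset.min'_mem S hne
    have hmxS : mx ∈ S := Finset.max'_mem S hne
    have hsub : S ⊆ Finset.Icc mn mx := by
      intro k hk; exact Finset.mem_Icc.mpr ⟨Finset.min'_le S k hk, Finset.le_max' S k hk⟩
    have hcardIcc := Finset.card_le_card hsub
    rw [Int.card_Icc] at hcardIcc
    have hspread_ge : mx - mn ≥ n + 1 := by omega
    by_cases hcons : mx - mn = n + 1
    · -- consecutive case
      have hSeq : S = Finset.Icc mn mx := by
        apply Finset.eq_of_subset_of_card_le hsub
        rw [Int.card_Icc]; omega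
      have himgeq : S.image g = (range (n+2)).image (fun i : ℕ => (x₀ + mn*h) + i*h) := by
        rw [hSeq]
        ext z
        simp only [Finset.mem_image, Finset.mem_Icc, Finset.mem_range]
        constructor
        · rintro ⟨k, ⟨h1, h2⟩, rfl⟩
          refine ⟨(k - mn).toNat, ?_, ?_⟩
          · omega
          · simp only [hg]
            have hcast : ((k - mn).toNat : ℝ) = (k:ℝ) - (mn:ℝ) := by
              have h3 := Int.toNat_of_nonneg (by omega : (0:ℤ) ≤ k - mn)
              exact_mod_cast congrArg (fun z : ℤ => (z:ℝ)) h3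
            rw [hcast]
            ring
        · rintro ⟨i, hi, rfl⟩
          refine ⟨mn + i, by omega, ?_⟩
          simp only [hg]
          push_cast
          ring
      rw [himgeq]
      have hkey := DD_grid h hh f (n+1) (x₀ + mn*h)
      have hjen := hf h hh (x₀ + mn*h) (hmem mn hmnS) (by
        have : x₀ + mn*h + (↑n + 1) * h = x₀ + mx*h := by
          have hmxr : (mx : ℝ) = (mn : ℝ) + ((n:ℝ)+1) := by
            exact_mod_cast (by omega : mx = mn + ((n:ℤ)+1))
          rw [hmxr]; ring
        rw [this]
        exact hmem mx hmxS)
      have hpos : (0:ℝ) < ((n+1).factorial : ℝ) * h ^ (n+1) := by positivity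
      nlinarith [hkey, hjen, hpos]
    · -- gap case: find a hole
      have hole : ∃ t, t ∈ Finset.Icc mn mx ∧ t ∉ S := by
        by_contra hcontra
        push_neg at hcontra
        have : Finset.Icc mn mx ⊆ S := fun k hk => hcontra k hk
        have := Finset.card_le_card this
        rw [Int.card_Icc] at this
        omega
      obtain ⟨t, htIcc, htS⟩ := hole
      obtain ⟨htlo, hthi⟩ := Finset.mem_Icc.mp htIcc
      have htmn : mn < t := lt_of_le_of_ne htlo (by rintro rfl; exact htS hmnS)
      have htmx : t < mx := lt_of_le_of_ne (by omega) (by rintro rfl; exact htS hmxS)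
      have hmnmx : mn ≠ mx := by omega
      -- P1 and P2
      set P1 : Finset ℤ := insert t (S.erase mn) with hP1
      set P2 : Finset ℤ := insert t (S.erase mx) with hP2
      have htm1 : t ∉ S.erase mn := fun hc => htS (Finset.mem_of_mem_erase hc)
      have htm2 : t ∉ S.erase mx := fun hc => htS (Finset.mem_of_mem_erase hc)
      have hP1card : P1.card = n + 2 := by
        rw [hP1, Finset.card_insert_of_notMem htm1, Finset.card_erase_of_mem hmnS]; omega
      have hP2card : P2.card = n + 2 := by
        rw [hP2, Finset.card_insert_of_notMem htm2, Finset.card_erase_of_mem hmxS]; omega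
      have hgtI : g t ∈ I := by
        have := hconn.out (hmem mn hmnS) (hmem mx hmxS)
        exact this ⟨le_of_lt (hgmono htmn), le_of_lt (hgmono htmx)⟩
      have hP1mem : ∀ k ∈ P1, x₀ + k*h ∈ I := by
        intro k hk
        rcases Finset.mem_insert.mp hk with rfl | hk'
        · exact hgtI
        · exact hmem k (Finset.mem_of_mem_erase hk')
      have hP2mem : ∀ k ∈ P2, x₀ + k*h ∈ I := by
        intro k hk
        rcases Finset.mem_insert.mp hk with rfl | hk'
        · exact hgtI
        · exact hmem k (Finset.mem_of_mem_erase hk')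
      have hP1ne : P1.Nonempty := by rw [← Finset.card_pos]; omega
      have hP2ne : P2.Nonempty := by rw [← Finset.card_pos]; omega
      have hP1spread : (P1.max' hP1ne - P1.min' hP1ne).toNat ≤ G := by
        have Hup : P1.max' hP1ne ≤ mx := by
          apply Finset.max'_le
          intro k hk
          rcases Finset.mem_insert.mp hk with rfl | hk'
          · omega
          · exact Finset.le_max' S k (Finset.mem_of_mem_erase hk')
        have Hlo : mn + 1 ≤ P1.min' hP1ne := by
          apply Finset.le_min'
          intro k hk
          rcases Finset.mem_insert.mp hk with rfl | hk'
          · omega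
          · have h1 := Finset.min'_le S k (Finset.mem_of_mem_erase hk')
            have h2 := (Finset.mem_erase.mp hk').1
            omega
        omega
      have hP2spread : (P2.max' hP2ne - P2.min' hP2ne).toNat ≤ G := by
        have Hup : P2.max' hP2ne ≤ mx - 1 := by
          apply Finset.max'_le
          intro k hk
          rcases Finset.mem_insert.mp hk with rfl | hk'
          · omega
          · have h1 := Finset.le_max' S k (Finset.mem_of_mem_erase hk')
            have h2 := (Finset.mem_erase.mp hk').1
            omega
        have Hlo : mn ≤ P2.min' hP2ne := by
          apply Finset.le_min'
          intro k hk
          rcases Finset.mem_insert.mp hk with rfl | hk'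
          · omega
          · exact Finset.min'_le S k (Finset.mem_of_mem_erase hk')
        omega
      have hA := ih P1 hP1card hP1mem hP1spread
      have hB := ih P2 hP2card hP2mem hP2spread
      -- recursion identities
      have hR1 : DD f ((insert t S).image g) * (g t - g mn)
          = DD f (P1.image g) - DD f (S.image g) := by
        have := DD_rec f ((S.erase mn).image g) (g mn) (g t)
          (himg _ _ (Finset.notMem_erase mn S)) (himg _ _ htm1)
          (fun hc => (by omega : mn ≠ t) (hginj hc))
        convert this using 3
        · rw [← Finset.image_insert, ← Finset.image_insert]
          congr 1
          rw [Finset.insert_comm, Finset.insert_erase hmnS]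
        · rw [hP1, Finset.image_insert]
        · rw [← Finset.image_insert, Finset.insert_erase hmnS]
      have hmnt : mn ≠ t := by omega
      have hmxt : mx ≠ t := by omega
      have hB2a : mn ∉ insert t ((S.erase mn).erase mx) := by
        simp [Finset.mem_insert, Finset.mem_erase, hmnt]
      have hB2b : mx ∉ insert t ((S.erase mn).erase mx) := by
        simp [Finset.mem_insert, Finset.mem_erase, hmxt]
      have hR2 := DD_rec f ((insert t ((S.erase mn).erase mx)).image g) (g mn) (g mx)
        (himg _ _ hB2a) (himg _ _ hB2b) (fun hc => hmnmx (hginj hc))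
      simp only [← Finset.image_insert] at hR2
      have E1 : insert mn (insert mx (insert t ((S.erase mn).erase mx))) = insert t S := by
        ext k
        simp only [Finset.mem_insert, Finset.mem_erase]
        constructor
        · rintro (rfl | rfl | rfl | ⟨_, _, hkS⟩)
          · exact Or.inr hmnS
          · exact Or.inr hmxS
          · exact Or.inl rfl
          · exact Or.inr hkS
        · rintro (rfl | hkS)
          · exact Or.inr (Or.inr (Or.inl rfl))
          · by_cases h1 : k = mn
            · exact Or.inl h1
            · by_cases h2 : k = mx
              · exact Or.inr (Or.inl h2)
              · exact Or.inr (Or.inr (Or.inr ⟨h2, h1, hkS⟩))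
      have E2 : insert mx (insert t ((S.erase mn).erase mx)) = P1 := by
        rw [hP1]
        ext k
        simp only [Finset.mem_insert, Finset.mem_erase]
        constructor
        · rintro (rfl | rfl | ⟨_, _, hkS⟩)
          · exact Or.inr ⟨Ne.symm hmnmx, hmxS⟩
          · exact Or.inl rfl
          · exact Or.inr ⟨by assumption, hkS⟩
        · rintro (rfl | ⟨h1, hkS⟩)
          · exact Or.inr (Or.inl rfl)
          · by_cases h2 : k = mx
            · exact Or.inl h2
            · exact Or.inr (Or.inr ⟨h2, h1, hkS⟩)
      have E3 : insert mn (insert t ((S.erase mn).erase mx)) = P2 := by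
        rw [hP2]
        ext k
        simp only [Finset.mem_insert, Finset.mem_erase]
        constructor
        · rintro (rfl | rfl | ⟨_, _, hkS⟩)
          · exact Or.inr ⟨hmnmx, hmnS⟩
          · exact Or.inl rfl
          · exact Or.inr ⟨by assumption, hkS⟩
        · rintro (rfl | ⟨h1, hkS⟩)
          · exact Or.inr (Or.inl rfl)
          · by_cases h2 : k = mn
            · exact Or.inl h2
            · exact Or.inr (Or.inr ⟨h1, h2, hkS⟩)
      rw [E1] at hR2
      have hR2' : DD f ((insert t S).image g) * (g mx - g mn)
          = DD f (P1.image g) - DD f (P2.image g) := by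
        rw [hR2]
        congr 2
        · rw [← E2]
        · rw [← E3]
      have hl : 0 < g t - g mn := sub_pos.2 (hgmono htmn)
      have hDl : g t - g mn < g mx - g mn := by
        have := hgmono htmx
        linarith
      have hD0 : 0 < g mx - g mn := lt_trans hl hDl
      have key : DD f (S.image g) * (g mx - g mn)
          = DD f (P1.image g) * ((g mx - g mn) - (g t - g mn))
            + DD f (P2.image g) * (g t - g mn) := by
        linear_combination (g mx - g mn) * hR1 - (g t - g mn) * hR2'
      nlinarith [key, hA, hB, hl, hDl, hD0,
        mul_nonneg hA (by linarith : (0:ℝ) ≤ (g mx - g mn) - (g t - g mn)),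
        mul_nonneg hB hl.le]

lemma DD_rat_nonneg (n : ℕ) (I : Set ℝ) (hconn : I.OrdConnected) (f : ℝ → ℝ)
    (hf : JensenConvexOrder n I f) (S : Finset ℝ) (hcard : S.card = n + 2)
    (hmem : ∀ x ∈ S, x ∈ I ∧ IsRatR x) : 0 ≤ DD f S := by
  classical
  set r : ℝ → ℚ := fun x => if hx : IsRatR x then hx.choose else 0 with hrdef
  have hr : ∀ x ∈ S, ((r x : ℚ) : ℝ) = x := by
    intro x hx
    have hrat := (hmem x hx).2
    simp only [hrdef, dif_pos hrat]
    exact hrat.choose_spec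
  set T : Finset ℚ := S.image r with hTdef
  have hTS : T.image (fun q : ℚ => (q : ℝ)) = S := by
    rw [hTdef, Finset.image_image]
    calc S.image (fun x => ((r x : ℚ) : ℝ)) = S.image id := Finset.image_congr (fun x hx => hr x hx)
    _ = S := Finset.image_id
  set N : ℕ := ∏ q ∈ T, q.den with hNdef
  have hNpos : 0 < N := by
    rw [hNdef]
    apply Finset.prod_pos
    intro q _
    exact q.pos
  have hNR : (0:ℝ) < N := by exact_mod_cast hNpos
  set φ : ℚ → ℤ := fun q => q.num * ((N : ℤ) / (q.den : ℤ)) with hφdef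
  have hkey : ∀ q ∈ T, ((0:ℝ) + (φ q : ℤ) * (1 / (N:ℝ))) = (q : ℝ) := by
    intro q hq
    have hdvd : (q.den : ℤ) ∣ (N : ℤ) := by
      exact_mod_cast Nat.cast_dvd_cast (Finset.dvd_prod_of_mem (fun q : ℚ => q.den) hq)
    obtain ⟨c, hc⟩ := hdvd
    have hdenpos : (0:ℤ) < (q.den : ℤ) := by exact_mod_cast q.pos
    have hdiv : (N : ℤ) / (q.den : ℤ) = c := by rw [hc, Int.mul_ediv_cancel_left _ (by omega)]
    have hcast : ((q.den : ℝ)) ≠ 0 := by positivity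
    rw [hφdef]
    simp only [hdiv]
    push_cast
    rw [Rat.cast_def]
    field_simp
    have hcR : ((N:ℤ) : ℝ) = ((q.den:ℤ) : ℝ) * (c : ℝ) := by exact_mod_cast hc
    push_cast at hcR ⊢
    rw [hcR]
    ring
  set Sz : Finset ℤ := T.image φ with hSzdef
  have himg : Sz.image (fun k : ℤ => (0:ℝ) + k * (1 / (N:ℝ))) = S := by
    rw [hSzdef, Finset.image_image]
    rw [show ((fun k : ℤ => (0:ℝ) + k * (1 / (N:ℝ))) ∘ φ) = fun q : ℚ => (0:ℝ) + (φ q) * (1/(N:ℝ)) from rfl]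
    rw [Finset.image_congr (fun q hq => hkey q hq), hTS]
  have hSzcard : Sz.card = n + 2 := by
    have h1 : Sz.card ≤ n + 2 := by
      calc Sz.card ≤ T.card := Finset.card_image_le
      _ ≤ S.card := Finset.card_image_le
      _ = n + 2 := hcard
    have h2 : n + 2 ≤ Sz.card := by
      calc n + 2 = S.card := hcard.symm
      _ = (Sz.image (fun k : ℤ => (0:ℝ) + k * (1 / (N:ℝ)))).card := by rw [himg]
      _ ≤ Sz.card := Finset.card_image_le
    omega
  have hSzmem : ∀ k ∈ Sz, (0:ℝ) + k * (1 / (N:ℝ)) ∈ I := by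
    intro k hk
    have : (0:ℝ) + k * (1 / (N:ℝ)) ∈ Sz.image (fun k : ℤ => (0:ℝ) + k * (1 / (N:ℝ))) :=
      Finset.mem_image_of_mem _ hk
    rw [himg] at this
    exact (hmem _ this).1
  have := DD_int_nonneg n I hconn f hf 0 (1 / (N:ℝ)) (by positivity)
    ((Sz.max' (by rw [← Finset.card_pos, hSzcard]; omega) - Sz.min' (by rw [← Finset.card_pos, hSzcard]; omega)).toNat)
    Sz hSzcard hSzmem le_rfl
  rwa [himg] at this

lemma DD_pair (f : ℝ → ℝ) (u v : ℝ) (huv : u ≠ v) :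
    DD f (insert u {v}) = (f v - f u) / (v - u) := by
  have h1 : u ∉ ({v} : Finset ℝ) := by simp [huv]
  rw [DD, Finset.sum_insert h1, Finset.erase_insert h1]
  have h2 : (insert u {v} : Finset ℝ).erase v = {u} := by
    ext z
    simp only [Finset.mem_erase, Finset.mem_insert, Finset.mem_singleton]
    constructor
    · rintro ⟨hz, rfl | rfl⟩
      · rfl
      · exact absurd rfl hz
    · rintro rfl
      exact ⟨huv, Or.inl rfl⟩
  rw [Finset.sum_singleton, h2]
  simp only [Finset.prod_singleton]
  have hvu : v - u ≠ 0 := sub_ne_zero.mpr (Ne.symm huv)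
  have huv' : u - v ≠ 0 := sub_ne_zero.mpr huv
  field_simp
  ring

lemma DD_mono (n : ℕ) (I : Set ℝ) (hconn : I.OrdConnected) (f : ℝ → ℝ)
    (hf : JensenConvexOrder n I f) (B : Finset ℝ) (hB : B.card = n)
    (u v : ℝ) (huv : u ≤ v) (hu : u ∉ B) (hv : v ∉ B)
    (hmem : ∀ x, (x = u ∨ x = v ∨ x ∈ B) → x ∈ I ∧ IsRatR x) :
    DD f (insert u B) ≤ DD f (insert v B) := by
  rcases eq_or_lt_of_le huv with rfl | hlt
  · exact le_refl _
  · have hrec := DD_rec f B u v hu hv hlt.ne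
    have hucard : u ∉ insert v B := by simp [hlt.ne, hu]
    have hpos : 0 ≤ DD f (insert u (insert v B)) := by
      apply DD_rat_nonneg n I hconn f hf
      · rw [Finset.card_insert_of_notMem hucard, Finset.card_insert_of_notMem hv, hB]
      · intro x hx
        apply hmem
        rcases Finset.mem_insert.mp hx with rfl | hx'
        · exact Or.inl rfl
        · rcases Finset.mem_insert.mp hx' with rfl | hx''
          · exact Or.inr (Or.inl rfl)
          · exact Or.inr (Or.inr hx'')
    nlinarith [mul_nonneg hpos (sub_nonneg.2 huv)]

set_option maxHeartbeats 2000000 in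
/-- An n-Jensen convex function is Lipschitz on the rational points of every compact
subinterval of I. -/
theorem jensen_convex_rational_lipschitz (n : ℕ) (hn : 1 ≤ n) (I : Set ℝ)
    (hI : ProperOpenInterval I) (f : ℝ → ℝ) (hf : JensenConvexOrder n I f) :
    ∀ a b : ℝ, a ≤ b → Set.Icc a b ⊆ I →
      ∃ L : ℝ, 0 ≤ L ∧ ∀ x ∈ Set.Icc a b, ∀ y ∈ Set.Icc a b,
        IsRatR x → IsRatR y → |f x - f y| ≤ L * |x - y| := by
  obtain ⟨hopen, hconn, -, -⟩ := hI
  intro a b hab hsub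
  have haI : a ∈ I := hsub ⟨le_refl a, hab⟩
  have hbI : b ∈ I := hsub ⟨hab, le_refl b⟩
  obtain ⟨ε, hε, hball⟩ := Metric.isOpen_iff.mp hopen a haI
  obtain ⟨δ, hδ, hballb⟩ := Metric.isOpen_iff.mp hopen b hbI
  obtain ⟨q1, hq1a, hq1b⟩ := exists_rat_btwn (show a - ε/2 < a by linarith)
  obtain ⟨q0, hq0a, hq0b⟩ := exists_rat_btwn (show a - ε < (q1:ℝ) by linarith)
  obtain ⟨r, hr1, hr2⟩ := exists_rat_btwn (show b < b + δ/2 by linarith)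
  obtain ⟨s, hs1, hs2⟩ := exists_rat_btwn (show (r:ℝ) < b + δ by linarith)
  have hq0I : (q0:ℝ) ∈ I := hball (by
    simp only [Metric.mem_ball, Real.dist_eq, abs_lt]
    constructor <;> linarith)
  have hrI : (r:ℝ) ∈ I := hballb (by
    simp only [Metric.mem_ball, Real.dist_eq, abs_lt]
    constructor <;> linarith)
  have hsI : (s:ℝ) ∈ I := hballb (by
    simp only [Metric.mem_ball, Real.dist_eq, abs_lt]
    constructor <;> linarith)
  -- the rational anchor points
  have hq01 : q0 < q1 := by exact_mod_cast hq0b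
  set step : ℚ := (q1 - q0) / (2*n+1) with hstepdef
  have hstep : 0 < step := by
    apply div_pos (by linarith)
    positivity
  set eQ : ℕ → ℚ := fun i => q0 + i * step with heQdef
  set e : ℕ → ℝ := fun i => ((eQ i : ℚ) : ℝ) with hedef
  have herat : ∀ i, IsRatR (e i) := fun i => ⟨eQ i, rfl⟩
  have hemono : StrictMono e := by
    intro i j hij
    have : eQ i < eQ j := by
      have hc : (i:ℚ) < j := by exact_mod_cast hij
      simp only [heQdef]
      nlinarith
    simp only [hedef]
    exact_mod_cast this
  have helb : ∀ i, (q0:ℝ) ≤ e i := by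
    intro i
    have : (q0:ℚ) ≤ eQ i := by
      simp only [heQdef]
      have : (0:ℚ) ≤ (i:ℚ) := Nat.cast_nonneg i
      nlinarith
    simp only [hedef]
    exact_mod_cast this
  have heub : ∀ i ≤ 2*n, e i < (q1:ℝ) := by
    intro i hi
    have : eQ i < q1 := by
      have hc : (i:ℚ) ≤ 2*n := by exact_mod_cast hi
      have hkey : ((2:ℚ)*n+1) * step = q1 - q0 := by
        rw [hstepdef]
        field_simp
      simp only [heQdef]
      nlinarith
    simp only [hedef]
    exact_mod_cast this
  have hea : ∀ i ≤ 2*n, e i < a := fun i hi => lt_trans (heub i hi) hq1b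
  have heb : ∀ i ≤ 2*n, e i ≤ b := fun i hi => le_of_lt (lt_of_lt_of_le (hea i hi) hab)
  have heI : ∀ i ≤ 2*n, e i ∈ I := by
    intro i hi
    apply hball
    simp only [Metric.mem_ball, Real.dist_eq, abs_lt]
    have h1 := helb i
    have h2 := hea i hi
    constructor <;> linarith
  -- good points
  have hGood : ∀ x : ℝ, IsRatR x → (q0:ℝ) ≤ x → x ≤ b → x ∈ I ∧ IsRatR x :=
    fun x hx h1 h2 => ⟨hconn.out hq0I hbI ⟨h1, h2⟩, hx⟩
  have hGoode : ∀ i ≤ 2*n, e i ∈ I ∧ IsRatR (e i) :=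
    fun i hi => ⟨heI i hi, herat i⟩
  -- the Finsets of anchors
  set C : ℕ → Finset ℝ := fun k => (range k).image e with hCdef
  have hCcard : ∀ k, (C k).card = k := by
    intro k
    rw [hCdef]
    rw [Finset.card_image_of_injective _ hemono.injective, Finset.card_range]
  have hCmem : ∀ k x, x ∈ C k → ∃ j, j < k ∧ e j = x := by
    intro k x hx
    obtain ⟨j, hj, rfl⟩ := Finset.mem_image.mp hx
    exact ⟨j, Finset.mem_range.mp hj, rfl⟩
  have hCnot : ∀ (k : ℕ) (x : ℝ), (∀ j, j < k → e j < x) → x ∉ C k := by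
    intro k x hlt hx
    obtain ⟨j, hj, rfl⟩ := hCmem k _ hx
    exact lt_irrefl _ (hlt j hj)
  have hCsucc : ∀ k, C (k+1) = insert (e k) (C k) := by
    intro k
    rw [hCdef]
    simp only
    rw [Finset.range_add_one, Finset.image_insert]
  have hCGood : ∀ k, k ≤ 2*n → ∀ x ∈ C k, x ∈ I ∧ IsRatR x := by
    intro k hk x hx
    obtain ⟨j, hj, rfl⟩ := hCmem k x hx
    exact hGoode j (by omega)
  -- The claim, by downward induction
  set Cl : ℕ → Prop := fun k => ∃ M : ℝ, 0 ≤ M ∧ ∀ u v : ℝ, IsRatR u → IsRatR v →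
      e (2*n - k) ≤ u → u < v → v ≤ b → |DD f (insert u (insert v (C k)))| ≤ M with hCldef
  -- base case
  have hbase : Cl (n-1) := by
    simp only [hCldef]
    refine ⟨max |DD f (insert (e (n-1)) (insert (e n) (C (n-1))))|
      |DD f (insert (s:ℝ) (insert (r:ℝ) (C (n-1))))|,
      le_trans (abs_nonneg _) (le_max_left _ _), ?_⟩
    intro u v hru hrv h1 h2 h3
    have hidx : 2*n - (n-1) = n+1 := by omega
    rw [hidx] at h1
    have hub : u ≤ b := le_of_lt (lt_of_lt_of_le h2 h3)
    have hq0u : (q0:ℝ) ≤ u := le_trans (helb (n+1)) h1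
    have hGu : u ∈ I ∧ IsRatR u := hGood u hru hq0u hub
    have hGv : v ∈ I ∧ IsRatR v := hGood v hrv (le_trans hq0u (le_of_lt h2)) h3
    have hGr : (r:ℝ) ∈ I ∧ IsRatR (r:ℝ) := ⟨hrI, ⟨r, rfl⟩⟩
    have hGs : (s:ℝ) ∈ I ∧ IsRatR (s:ℝ) := ⟨hsI, ⟨s, rfl⟩⟩
    have hCG : ∀ x ∈ C (n-1), x ∈ I ∧ IsRatR x := hCGood (n-1) (by omega)
    have heCb : ∀ x ∈ C (n-1), x < e (n-1) := by
      intro x hx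
      obtain ⟨j, hj, rfl⟩ := hCmem _ x hx
      exact hemono (by omega)
    have hnC : ∀ x : ℝ, e (n-1) ≤ x → x ∉ C (n-1) :=
      fun x hx hc => absurd (heCb x hc) (not_lt.2 hx)
    have hen1n : e (n-1) < e n := hemono (by omega)
    have hen_lt_u : e n < u := lt_of_lt_of_le (hemono (by omega : n < n+1)) h1
    have hen1_lt_u : e (n-1) < u := lt_trans hen1n hen_lt_u
    have hbr : b < (r:ℝ) := hr1
    have hrs : (r:ℝ) < (s:ℝ) := by exact_mod_cast hs1
    have hGen1 : e (n-1) ∈ I ∧ IsRatR (e (n-1)) := hGoode (n-1) (by omega)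
    have hGen : e n ∈ I ∧ IsRatR (e n) := hGoode n (by omega)
    -- step 1
    have res1 : DD f (insert (e (n-1)) (insert (e n) (C (n-1))))
        ≤ DD f (insert u (insert (e n) (C (n-1)))) := by
      apply DD_mono n I hconn f hf _ ?_ _ _ hen1_lt_u.le ?_ ?_ ?_
      · rw [Finset.card_insert_of_notMem (hnC _ hen1n.le), hCcard]; omega
      · simp only [Finset.mem_insert, not_or]
        exact ⟨hen1n.ne, hnC _ le_rfl⟩
      · simp only [Finset.mem_insert, not_or]
        exact ⟨hen_lt_u.ne', hnC _ hen1_lt_u.le⟩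
      · rintro x (rfl | rfl | hx)
        · exact hGen1
        · exact hGu
        · rcases Finset.mem_insert.mp hx with rfl | hx'
          · exact hGen
          · exact hCG _ hx'
    -- step 2
    have res2 : DD f (insert (e n) (insert u (C (n-1))))
        ≤ DD f (insert v (insert u (C (n-1)))) := by
      apply DD_mono n I hconn f hf _ ?_ _ _ (le_of_lt (lt_trans hen_lt_u h2)) ?_ ?_ ?_
      · rw [Finset.card_insert_of_notMem (hnC _ hen1_lt_u.le), hCcard]; omega
      · simp only [Finset.mem_insert, not_or]
        exact ⟨hen_lt_u.ne, hnC _ hen1n.le⟩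
      · simp only [Finset.mem_insert, not_or]
        exact ⟨h2.ne', hnC _ (le_of_lt (lt_trans hen1_lt_u h2))⟩
      · rintro x (rfl | rfl | hx)
        · exact hGen
        · exact hGv
        · rcases Finset.mem_insert.mp hx with rfl | hx'
          · exact hGu
          · exact hCG _ hx'
    -- step 3
    have res3 : DD f (insert u (insert v (C (n-1))))
        ≤ DD f (insert (r:ℝ) (insert v (C (n-1)))) := by
      apply DD_mono n I hconn f hf _ ?_ _ _ (by linarith : u ≤ (r:ℝ)) ?_ ?_ ?_
      · rw [Finset.card_insert_of_notMem (hnC _ (le_of_lt (lt_trans hen1_lt_u h2))), hCcard]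
        omega
      · simp only [Finset.mem_insert, not_or]
        exact ⟨h2.ne, hnC _ hen1_lt_u.le⟩
      · simp only [Finset.mem_insert, not_or]
        exact ⟨(by linarith : v < (r:ℝ)).ne', hnC _ (by linarith)⟩
      · rintro x (rfl | rfl | hx)
        · exact hGu
        · exact hGr
        · rcases Finset.mem_insert.mp hx with rfl | hx'
          · exact hGv
          · exact hCG _ hx'
    -- step 4
    have res4 : DD f (insert v (insert (r:ℝ) (C (n-1))))
        ≤ DD f (insert (s:ℝ) (insert (r:ℝ) (C (n-1)))) := by
      apply DD_mono n I hconn f hf _ ?_ _ _ (by linarith : v ≤ (s:ℝ)) ?_ ?_ ?_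
      · rw [Finset.card_insert_of_notMem (hnC _ (by linarith)), hCcard]; omega
      · simp only [Finset.mem_insert, not_or]
        exact ⟨(by linarith : v < (r:ℝ)).ne, hnC _ (by linarith)⟩
      · simp only [Finset.mem_insert, not_or]
        exact ⟨hrs.ne', hnC _ (by linarith)⟩
      · rintro x (rfl | rfl | hx)
        · exact hGv
        · exact hGs
        · rcases Finset.mem_insert.mp hx with rfl | hx'
          · exact hGr
          · exact hCG _ hx'
    have c1 : insert u (insert (e n) (C (n-1))) = insert (e n) (insert u (C (n-1))) :=
      Finset.insert_comm _ _ _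
    have c2 : insert v (insert u (C (n-1))) = insert u (insert v (C (n-1))) :=
      Finset.insert_comm _ _ _
    have c3 : insert (r:ℝ) (insert v (C (n-1))) = insert v (insert (r:ℝ) (C (n-1))) :=
      Finset.insert_comm _ _ _
    rw [c1] at res1
    rw [c2] at res2
    rw [c3] at res3
    have hL : DD f (insert (e (n-1)) (insert (e n) (C (n-1))))
        ≤ DD f (insert u (insert v (C (n-1)))) := le_trans res1 res2
    have hU : DD f (insert u (insert v (C (n-1))))
        ≤ DD f (insert (s:ℝ) (insert (r:ℝ) (C (n-1)))) := le_trans res3 res4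
    rw [abs_le]
    constructor
    · have hL1 := neg_abs_le (DD f (insert (e (n-1)) (insert (e n) (C (n-1)))))
      have hL2 := le_max_left |DD f (insert (e (n-1)) (insert (e n) (C (n-1))))|
        |DD f (insert (s:ℝ) (insert (r:ℝ) (C (n-1))))|
      linarith
    · have hU1 := le_abs_self (DD f (insert (s:ℝ) (insert (r:ℝ) (C (n-1)))))
      have hU2 := le_max_right |DD f (insert (e (n-1)) (insert (e n) (C (n-1))))|
        |DD f (insert (s:ℝ) (insert (r:ℝ) (C (n-1))))|
      linarith
  -- step
  have hstepCl : ∀ k : ℕ, k + 1 ≤ n - 1 → Cl (k+1) → Cl k := by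
    intro k hk hCl1
    simp only [hCldef] at hCl1 ⊢
    obtain ⟨M, hM0, hM⟩ := hCl1
    have hb0 : e 0 ≤ b := heb 0 (by omega)
    have he0a : e 0 < a := hea 0 (by omega)
    refine ⟨M * (b - e 0) + (M * (b - e 0) + |DD f (insert (e (2*n - (k+1))) (C (k+1)))|), by
      have hb1 : (0:ℝ) ≤ b - e 0 := by linarith
      nlinarith [mul_nonneg hM0 hb1, abs_nonneg (DD f (insert (e (2*n - (k+1))) (C (k+1))))], ?_⟩
    intro u v hru hrv h1 h2 h3
    have hidx1 : 2*n - (k+1) < 2*n - k := by omega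
    have hpu : e (2*n - (k+1)) < u := lt_of_lt_of_le (hemono hidx1) h1
    have hub : u ≤ b := le_of_lt (lt_of_lt_of_le h2 h3)
    have hjp : ∀ j, j < k + 1 → e j < e (2*n - (k+1)) := fun j hj => hemono (by omega)
    have hpC : e (2*n - (k+1)) ∉ C (k+1) := hCnot _ _ hjp
    have huC1 : u ∉ C (k+1) := hCnot _ _ (fun j hj => lt_trans (hjp j hj) hpu)
    have hrec2 := DD_rec f (C (k+1)) (e (2*n - (k+1))) u hpC huC1 hpu.ne
    have hbound1 : |DD f (insert (e (2*n - (k+1))) (insert u (C (k+1))))| ≤ M :=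
      hM (e (2*n - (k+1))) u (herat _) hru le_rfl hpu hub
    have hpe0 : e 0 ≤ e (2*n - (k+1)) := hemono.monotone (by omega)
    have hBu : |DD f (insert u (C (k+1)))| ≤ M * (b - e 0)
        + |DD f (insert (e (2*n - (k+1))) (C (k+1)))| := by
      have heq : DD f (insert u (C (k+1)))
          = DD f (insert (e (2*n - (k+1))) (insert u (C (k+1)))) * (u - e (2*n - (k+1)))
            + DD f (insert (e (2*n - (k+1))) (C (k+1))) := by linarith [hrec2]
      rw [heq]
      refine le_trans (abs_add_le _ _) ?_
      rw [abs_mul, abs_of_nonneg (by linarith : (0:ℝ) ≤ u - e (2*n - (k+1)))]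
      have hle : u - e (2*n - (k+1)) ≤ b - e 0 := by linarith
      nlinarith [abs_nonneg (DD f (insert (e (2*n - (k+1))) (insert u (C (k+1)))))]
    have hkp : k < 2*n - (k+1) := by omega
    have hekv : e k < v := lt_trans (lt_trans (hemono hkp) hpu) h2
    have heku : e k < u := lt_trans (hemono hkp) hpu
    have hekC : e k ∉ C k := hCnot _ _ (fun j hj => hemono hj)
    have hekB : e k ∉ insert u (C k) := by
      simp only [Finset.mem_insert, not_or]
      exact ⟨heku.ne, hekC⟩
    have hvB : v ∉ insert u (C k) := by
      simp only [Finset.mem_insert, not_or]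
      refine ⟨h2.ne', hCnot _ _ (fun j hj => lt_trans (hemono (by omega : j < 2*n - (k+1)))
        (lt_trans hpu h2))⟩
    have hrec1 := DD_rec f (insert u (C k)) (e k) v hekB hvB hekv.ne
    have id1 : insert (e k) (insert v (insert u (C k))) = insert u (insert v (C (k+1))) := by
      rw [hCsucc k]
      ext z
      simp only [Finset.mem_insert]
      tauto
    have id2 : insert v (insert u (C k)) = insert u (insert v (C k)) := Finset.insert_comm _ _ _
    have id3 : insert (e k) (insert u (C k)) = insert u (C (k+1)) := by
      rw [hCsucc k]
      exact Finset.insert_comm _ _ _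
    rw [id1, id2, id3] at hrec1
    have hbound2 : |DD f (insert u (insert v (C (k+1))))| ≤ M := hM u v hru hrv hpu.le h2 h3
    have heq2 : DD f (insert u (insert v (C k)))
        = DD f (insert u (insert v (C (k+1)))) * (v - e k) + DD f (insert u (C (k+1))) := by
      linarith [hrec1]
    rw [heq2]
    refine le_trans (abs_add_le _ _) ?_
    refine add_le_add ?_ hBu
    rw [abs_mul, abs_of_nonneg (by linarith : (0:ℝ) ≤ v - e k)]
    have he0k : e 0 ≤ e k := hemono.monotone (Nat.zero_le k)
    have hle : v - e k ≤ b - e 0 := by linarith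
    nlinarith [abs_nonneg (DD f (insert u (insert v (C (k+1)))))]
  -- descent
  have hCl0 : Cl 0 := by
    have main : ∀ j, j ≤ n - 1 → Cl (n - 1 - j) := by
      intro j
      induction j with
      | zero => intro _; simpa using hbase
      | succ j ih =>
        intro hj
        have h1 := ih (by omega)
        have h2 : n - 1 - j = (n - 1 - (j+1)) + 1 := by omega
        rw [h2] at h1
        exact hstepCl _ (by omega) h1
    have := main (n-1) le_rfl
    simpa [Nat.sub_self] using this
  -- conclusion
  obtain ⟨M, hM0, hM⟩ := hCl0
  refine ⟨M, hM0, ?_⟩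
  have hfinal : ∀ u v : ℝ, u ∈ Set.Icc a b → v ∈ Set.Icc a b → IsRatR u → IsRatR v →
      u < v → |f v - f u| ≤ M * (v - u) := by
    intro u v hu hv hru hrv huv
    have hC0 : C 0 = ∅ := by rw [hCdef]; simp
    have key := hM u v hru hrv (by
        have h1 : e (2*n - 0) < a := hea _ (by omega)
        have h2 : a ≤ u := hu.1
        linarith) huv hv.2
    rw [hC0] at key
    have hpair : DD f (insert u (insert v (∅ : Finset ℝ))) = (f v - f u) / (v - u) := by
      have : (insert v (∅ : Finset ℝ)) = {v} := rfl
      rw [this, DD_pair f u v huv.ne]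
    rw [hpair, abs_div, abs_of_pos (sub_pos.2 huv)] at key
    calc |f v - f u| = (|f v - f u| / (v - u)) * (v - u) :=
          (div_mul_cancel₀ _ (ne_of_gt (sub_pos.2 huv))).symm
    _ ≤ M * (v - u) := by
          apply mul_le_mul_of_nonneg_right key (by linarith)
  intro x hx y hy hrx hry
  rcases lt_trichotomy x y with h | h | h
  · have := hfinal x y hx hy hrx hry h
    rw [abs_sub_comm x y, abs_sub_comm (f x) (f y), abs_of_pos (sub_pos.2 h)]
    exact this
  · simp [h]
  · have := hfinal y x hy hx hry hrx h
    rw [abs_of_pos (sub_pos.2 h)]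
    exact this
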